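/- For the Mellin–Fejér kernel F⁰₁, the tail sums vanish uniformly: lim_{r→+∞} sup_{u>0} ∑_{|k − log u| > r} F⁰₁(e^{-k}u) = 0. In particular, for u with log u not an integer, (1/(2π)) ∑_{|k−log u|>r} sinc²(log√(e^{-k}u)) ≤ (2/(π√r)) ∑_{k∈ℤ} sin²((log u − k)/2)/|log u − k|^{3/2}, and the right-hand series is bounded by 1 + 2∑_{k≥1} k^{-3/2} uniformly in u. -/

import Mathlib

open Real

/-- `sinc u = sin(πu)/(πu)`, `sinc 0 = 1`. -/
noncomputable def sinc (u : ℝ) : ℝ :=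
  if u = 0 then 1 else Real.sin (π * u) / (π * u)

/-- The Mellin–Fejér kernel with `c = 0`, `ρ = 1`. -/
noncomputable def mellinFejer01 (x : ℝ) : ℝ :=
  1 / (2 * π) * _root_.sinc (Real.log (Real.sqrt x) / π) ^ 2

/-- the comparison function -/
noncomputable def gg (θ : ℝ) (k : ℤ) : ℝ :=
  Real.sin ((θ - k) / 2) ^ 2 / |θ - (k : ℝ)| ^ ((3:ℝ)/2)

lemma gg_nonneg (θ : ℝ) (k : ℤ) : 0 ≤ gg θ k := by
  unfold gg; positivity

lemma sinc_div_pi {t : ℝ} (ht : t ≠ 0) : _root_.sinc (t / π) = Real.sin t / t := by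
  unfold _root_.sinc
  rw [if_neg (div_ne_zero ht pi_ne_zero), mul_div_cancel₀ _ pi_ne_zero]

lemma log_sqrt_exp_mul {u : ℝ} (hu : 0 < u) (k : ℤ) :
    Real.log (Real.sqrt (Real.exp (-(k:ℤ)) * u)) = (Real.log u - k) / 2 := by
  rw [Real.log_sqrt (by positivity), Real.log_mul (Real.exp_ne_zero _) hu.ne',
    Real.log_exp]
  push_cast; ring

lemma mF_eq {u : ℝ} (hu : 0 < u) {k : ℤ} (hd : Real.log u - (k:ℝ) ≠ 0) :
    mellinFejer01 (Real.exp (-(k:ℤ)) * u)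
      = 2 / π * (Real.sin ((Real.log u - k) / 2) ^ 2 / (Real.log u - (k:ℝ)) ^ 2) := by
  unfold mellinFejer01
  rw [log_sqrt_exp_mul hu, sinc_div_pi (by simpa using hd), div_pow]
  have h2 : ((Real.log u - k) / 2) ^ 2 = (Real.log u - (k:ℝ)) ^ 2 / 4 := by ring
  rw [h2]
  have : (Real.log u - (k:ℝ)) ^ 2 ≠ 0 := pow_ne_zero _ hd
  field_simp
  ring

lemma gg_le_quarter {θ : ℝ} {k : ℤ} (h : |θ - (k:ℝ)| ≤ 1) : gg θ k ≤ 1/4 := by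
  unfold gg
  set d := θ - (k:ℝ) with hd
  rcases eq_or_ne d 0 with h0 | h0
  · rw [h0]; norm_num
  have hda : 0 < |d| := abs_pos.mpr h0
  have hsin : Real.sin (d/2) ^ 2 ≤ |d| ^ (2:ℝ) / 4 := by
    calc Real.sin (d/2) ^ 2 ≤ (d/2) ^ 2 := Real.sin_sq_le_sq
      _ = |d| ^ (2:ℝ) / 4 := by rw [Real.rpow_two, sq_abs]; ring
  have hsplit : |d| ^ (2:ℝ) = |d| ^ ((1:ℝ)/2) * |d| ^ ((3:ℝ)/2) := by
    rw [← Real.rpow_add hda]; norm_num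
  calc Real.sin (d/2) ^ 2 / |d| ^ ((3:ℝ)/2) ≤ (|d| ^ (2:ℝ) / 4) / |d| ^ ((3:ℝ)/2) := by
        gcongr
    _ = |d| ^ ((1:ℝ)/2) / 4 := by
        rw [hsplit]; field_simp
    _ ≤ 1/4 := by
        have : |d| ^ ((1:ℝ)/2) ≤ 1 := Real.rpow_le_one (abs_nonneg d) h (by norm_num)
        linarith

lemma gg_le_of_le {θ : ℝ} {k : ℤ} {a : ℝ} (ha : 0 < a) (h : a ≤ |θ - (k:ℝ)|) :
    gg θ k ≤ a ^ (-(3:ℝ)/2) := by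
  unfold gg
  have h1 : Real.sin ((θ - k)/2) ^ 2 ≤ 1 := by
    rw [← Real.sin_sq_add_cos_sq ((θ - k)/2)]; nlinarith [sq_nonneg (Real.cos ((θ-k)/2))]
  have h2 : a ^ ((3:ℝ)/2) ≤ |θ - (k:ℝ)| ^ ((3:ℝ)/2) :=
    Real.rpow_le_rpow ha.le h (by norm_num)
  have ha3 : (0:ℝ) < a ^ ((3:ℝ)/2) := Real.rpow_pos_of_pos ha _
  calc Real.sin ((θ - k)/2) ^ 2 / |θ - (k:ℝ)| ^ ((3:ℝ)/2)
      ≤ 1 / a ^ ((3:ℝ)/2) := by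
        gcongr
    _ = a ^ (-(3:ℝ)/2) := by
        rw [neg_div, Real.rpow_neg ha.le, one_div]

lemma S_summable : Summable (fun k : ℕ => ((k:ℝ) + 1) ^ (-(3:ℝ)/2)) := by
  have h : Summable (fun k : ℕ => 1 / ((k:ℝ)) ^ ((3:ℝ)/2)) :=
    Real.summable_one_div_nat_rpow.mpr (by norm_num)
  have h2 := (summable_nat_add_iff 1).mpr h
  apply h2.congr
  intro k
  rw [neg_div, Real.rpow_neg (by positivity), one_div]
  push_cast
  ring_nf

lemma S_nonneg : 0 ≤ ∑' k : ℕ, ((k:ℝ) + 1) ^ (-(3:ℝ)/2) :=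
  tsum_nonneg fun k => by positivity

section main
variable (θ : ℝ)

private noncomputable def MA : ℕ → ℝ := fun j => if j ≤ 1 then (1:ℝ)/4 else ((j:ℝ) - 1) ^ (-(3:ℝ)/2)

private lemma MA_shift : (fun j : ℕ => MA (j + 2)) = fun j : ℕ => ((j:ℝ) + 1) ^ (-(3:ℝ)/2) := by
  funext j
  have : ¬ (j + 2 ≤ 1) := by omega
  simp only [MA, if_neg this]
  push_cast; ring_nf

private lemma MA_summable : Summable MA := (summable_nat_add_iff 2).mp (MA_shift ▸ S_summable)

private lemma MA_tsum : ∑' j, MA j = 1/2 + ∑' k : ℕ, ((k:ℝ) + 1) ^ (-(3:ℝ)/2) := by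
  rw [Summable.tsum_eq_zero_add MA_summable, Summable.tsum_eq_zero_add ((summable_nat_add_iff 1).mpr MA_summable)]
  have h1 : MA 0 = 1/4 := by simp [MA]
  have h2 : MA (0 + 1) = 1/4 := by simp [MA]
  have h3 : ∑' j, MA (j + 1 + 1) = ∑' k : ℕ, ((k:ℝ) + 1) ^ (-(3:ℝ)/2) := by
    rw [← MA_shift]
  rw [h1, h2, h3]; ring

private lemma A_le (j : ℕ) : gg θ (⌊θ⌋ + j) ≤ MA j := by
  have hfl : (⌊θ⌋ : ℝ) ≤ θ := Int.floor_le θ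
  have hfu : θ < ⌊θ⌋ + 1 := Int.lt_floor_add_one θ
  unfold MA
  by_cases hj : j ≤ 1
  · rw [if_pos hj]
    apply gg_le_quarter
    interval_cases j <;> · push_cast; rw [abs_le]; constructor <;> linarith
  · rw [if_neg hj]
    have hj2 : 2 ≤ j := by omega
    have hjr : (1:ℝ) ≤ (j:ℝ) - 1 := by
      have : (2:ℝ) ≤ (j:ℝ) := by exact_mod_cast hj2
      linarith
    apply gg_le_of_le (by linarith)
    have hd : θ - ((⌊θ⌋:ℤ) + (j:ℤ) : ℤ) = -(((⌊θ⌋:ℝ) + j) - θ) := by push_cast; ring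
    rw [hd, abs_neg, abs_of_nonneg (by push_cast; linarith [Nat.cast_nonneg (α := ℝ) j])]
    push_cast
    linarith

private lemma B_le (j : ℕ) : gg θ (⌊θ⌋ + (-(j + 1))) ≤ ((j:ℝ) + 1) ^ (-(3:ℝ)/2) := by
  have hfl : (⌊θ⌋ : ℝ) ≤ θ := Int.floor_le θ
  apply gg_le_of_le (by positivity)
  have : θ - ((⌊θ⌋ : ℝ) + (-((j:ℝ) + 1))) = (θ - ⌊θ⌋) + (j + 1) := by ring
  push_cast
  rw [this, abs_of_nonneg (by linarith [Nat.cast_nonneg (α := ℝ) j])]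
  linarith
end main

lemma A_summable (θ : ℝ) : Summable (fun j : ℕ => gg θ (⌊θ⌋ + j)) :=
  MA_summable.of_nonneg_of_le (fun j => gg_nonneg θ _) (A_le θ)

lemma B_summable (θ : ℝ) : Summable (fun j : ℕ => gg θ (⌊θ⌋ + (-(j + 1)))) :=
  S_summable.of_nonneg_of_le (fun j => gg_nonneg θ _) (B_le θ)

lemma gg_summable (θ : ℝ) : Summable (gg θ) := by
  have h : Summable (fun n : ℤ => gg θ (⌊θ⌋ + n)) :=
    Summable.of_nat_of_neg_add_one (A_summable θ) (B_summable θ)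
  have := (Equiv.addLeft (⌊θ⌋)).summable_iff (f := gg θ)
  exact this.mp h

lemma gg_tsum_le (θ : ℝ) :
    ∑' k : ℤ, gg θ k ≤ 1 + 2 * ∑' k : ℕ, ((k:ℝ) + 1) ^ (-(3:ℝ)/2) := by
  set S := ∑' k : ℕ, ((k:ℝ) + 1) ^ (-(3:ℝ)/2) with hS
  have he : ∑' k : ℤ, gg θ k = ∑' n : ℤ, gg θ (⌊θ⌋ + n) :=
    ((Equiv.addLeft (⌊θ⌋)).tsum_eq (gg θ)).symm
  have ht := tsum_of_nat_of_neg_add_one (f := fun n : ℤ => gg θ (⌊θ⌋ + n))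
    (A_summable θ) (B_summable θ)
  rw [he, ht]
  have hA : ∑' j : ℕ, gg θ (⌊θ⌋ + j) ≤ 1/2 + S := by
    calc ∑' j : ℕ, gg θ (⌊θ⌋ + j) ≤ ∑' j, MA j :=
          Summable.tsum_le_tsum (A_le θ) (A_summable θ) MA_summable
      _ = 1/2 + S := MA_tsum
  have hB : ∑' j : ℕ, gg θ (⌊θ⌋ + (-(j + 1))) ≤ S :=
    Summable.tsum_le_tsum (B_le θ) (B_summable θ) S_summable
  linarith [S_nonneg]

lemma sqrt_le_rpow_half {r d : ℝ} (hr : 0 ≤ r) (h : r ≤ d) :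
    Real.sqrt r ≤ d ^ ((1:ℝ)/2) := by
  rw [Real.sqrt_eq_rpow]
  exact Real.rpow_le_rpow hr h (by norm_num)

lemma term_le {θ : ℝ} {k : ℤ} {r : ℝ} (hr : 0 < r) (h : r < |(k:ℝ) - θ|) :
    2 / π * (Real.sin ((θ - k)/2) ^ 2 / (θ - (k:ℝ)) ^ 2)
      ≤ 2 / (π * Real.sqrt r) * gg θ k := by
  set d := θ - (k:ℝ) with hdd
  set s := Real.sin (d / 2) ^ 2 with hs
  have hs0 : 0 ≤ s := sq_nonneg _
  have habs : r < |d| := by rwa [abs_sub_comm] at h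
  have hd0 : 0 < |d| := lt_trans hr habs
  set X := |d| ^ ((1:ℝ)/2) with hX
  set Y := |d| ^ ((3:ℝ)/2) with hY
  have hXpos : 0 < X := Real.rpow_pos_of_pos hd0 _
  have hYpos : 0 < Y := Real.rpow_pos_of_pos hd0 _
  have hd2 : d ^ 2 = X * Y := by
    rw [hX, hY, ← Real.rpow_add hd0, show (1:ℝ)/2 + (3:ℝ)/2 = 2 by norm_num,
      Real.rpow_two, sq_abs]
  have hsqrt : Real.sqrt r ≤ X := sqrt_le_rpow_half hr.le habs.le
  have hsr : 0 < Real.sqrt r := Real.sqrt_pos.mpr hr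
  have hgg : gg θ k = s / Y := rfl
  rw [hgg, hd2]
  have e1 : 2 / π * (s / (X * Y)) = (2 * s) / (π * (X * Y)) := by ring
  have e2 : 2 / (π * Real.sqrt r) * (s / Y) = (2 * s) / (π * (Real.sqrt r * Y)) := by ring
  rw [e1, e2]
  gcongr

lemma mF_nonneg (x : ℝ) : 0 ≤ mellinFejer01 x := by
  unfold mellinFejer01
  positivity

lemma tsum_gg_subtype_le (θ : ℝ) (s : Set ℤ) :
    ∑' k : s, gg θ k ≤ ∑' k : ℤ, gg θ k := by
  rw [tsum_subtype]
  exact Summable.tsum_le_tsum (fun k => Set.indicator_le_self' (fun x _ => gg_nonneg θ x) k)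
    ((gg_summable θ).indicator s) (gg_summable θ)

lemma tail_le {r u : ℝ} (hr : 0 < r) (hu : 0 < u) :
    ∑' k : {k : ℤ // r < |(k : ℝ) - Real.log u|},
        mellinFejer01 (Real.exp (-(k:ℤ)) * u)
      ≤ 2 / (π * Real.sqrt r) * ∑' k : ℤ, gg (Real.log u) k := by
  set θ := Real.log u with hθ
  set c := 2 / (π * Real.sqrt r) with hc
  have hc0 : 0 ≤ c := by
    rw [hc]; positivity
  have hterm : ∀ k : {k : ℤ // r < |(k : ℝ) - θ|},
      mellinFejer01 (Real.exp (-(k:ℤ)) * u) ≤ c * gg θ k := by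
    rintro ⟨k, hk⟩
    have hd : θ - (k:ℝ) ≠ 0 := by
      intro h0
      rw [abs_sub_comm, h0, abs_zero] at hk
      exact absurd hk (not_lt.mpr hr.le)
    rw [mF_eq hu hd]
    exact term_le hr hk
  have hsum2 : Summable (fun k : {k : ℤ // r < |(k : ℝ) - θ|} => c * gg θ k) :=
    (((gg_summable θ).subtype _)).mul_left c
  have hsum1 : Summable (fun k : {k : ℤ // r < |(k : ℝ) - θ|} =>
      mellinFejer01 (Real.exp (-(k:ℤ)) * u)) :=
    hsum2.of_nonneg_of_le (fun k => mF_nonneg _) hterm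
  calc ∑' k : {k : ℤ // r < |(k : ℝ) - θ|}, mellinFejer01 (Real.exp (-(k:ℤ)) * u)
      ≤ ∑' k : {k : ℤ // r < |(k : ℝ) - θ|}, c * gg θ k :=
        Summable.tsum_le_tsum hterm hsum1 hsum2
    _ = c * ∑' k : {k : ℤ // r < |(k : ℝ) - θ|}, gg θ k := tsum_mul_left
    _ ≤ c * ∑' k : ℤ, gg θ k := by
        apply mul_le_mul_of_nonneg_left _ hc0
        exact tsum_gg_subtype_le θ {k : ℤ | r < |(k : ℝ) - θ|}

/-- Uniform vanishing of the tails of the Mellin–Fejér kernel, together with the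
key quantitative estimates. -/
theorem mellinFejer01_tails_vanish :
    (∀ ε > (0:ℝ), ∃ r₀ : ℝ, ∀ r ≥ r₀, ∀ u : ℝ, 0 < u →
      ∑' k : {k : ℤ // r < |(k : ℝ) - Real.log u|},
        mellinFejer01 (Real.exp (-(k:ℤ)) * u) < ε) ∧
    (∀ r > (0:ℝ), ∀ u : ℝ, 0 < u → (∀ k : ℤ, Real.log u ≠ k) →
      ∑' k : {k : ℤ // r < |(k : ℝ) - Real.log u|},
          mellinFejer01 (Real.exp (-(k:ℤ)) * u)
        ≤ 2 / (π * Real.sqrt r) *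
          ∑' k : ℤ, Real.sin ((Real.log u - k) / 2) ^ 2 /
            |Real.log u - (k : ℝ)| ^ ((3:ℝ)/2)) ∧
    (∀ u : ℝ, 0 < u → (∀ k : ℤ, Real.log u ≠ k) →
      ∑' k : ℤ, Real.sin ((Real.log u - k) / 2) ^ 2 /
          |Real.log u - (k : ℝ)| ^ ((3:ℝ)/2)
        ≤ 1 + 2 * ∑' k : ℕ, ((k : ℝ) + 1) ^ (-(3:ℝ)/2)) := by
  refine ⟨?_, ?_, ?_⟩
  · intro ε hε
    set S := ∑' k : ℕ, ((k:ℝ) + 1) ^ (-(3:ℝ)/2) with hS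
    set C := 1 + 2 * S with hCdef
    have hC0 : 0 < C := by have := S_nonneg; rw [hCdef, ← hS] at *; linarith
    refine ⟨(2 * C / (π * ε)) ^ 2 + 1, fun r hr u hu => ?_⟩
    have hr0 : 0 < r := lt_of_lt_of_le (by positivity) hr
    have hsr : 0 < Real.sqrt r := Real.sqrt_pos.mpr hr0
    have h1 : 2 * C / (π * ε) < Real.sqrt r := by
      have h2 : (2 * C / (π * ε)) ^ 2 < r := by linarith
      calc 2 * C / (π * ε) = Real.sqrt ((2 * C / (π * ε)) ^ 2) :=
            (Real.sqrt_sq (by positivity)).symm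
        _ < Real.sqrt r := Real.sqrt_lt_sqrt (sq_nonneg _) h2
    calc ∑' k : {k : ℤ // r < |(k : ℝ) - Real.log u|},
          mellinFejer01 (Real.exp (-(k:ℤ)) * u)
        ≤ 2 / (π * Real.sqrt r) * ∑' k : ℤ, gg (Real.log u) k := tail_le hr0 hu
      _ ≤ 2 / (π * Real.sqrt r) * C := by
          have := gg_tsum_le (Real.log u)
          rw [← hS, ← hCdef] at this
          exact mul_le_mul_of_nonneg_left this (by positivity)
      _ < ε := by
          rw [show 2 / (π * Real.sqrt r) * C = 2 * C / (π * Real.sqrt r) by ring,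
            div_lt_iff₀ (by positivity)]
          have h3 : 2 * C < Real.sqrt r * (π * ε) :=
            (div_lt_iff₀ (by positivity)).mp h1
          nlinarith
  · intro r hr u hu _
    have := tail_le hr hu
    unfold gg at this
    exact this
  · intro u hu _
    have := gg_tsum_le (Real.log u)
    unfold gg at this
    exact this
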